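/- arXiv:1601.06688 — 3 statements merged into one kernel-verified Lean document; each statement's English description precedes it below -/
import Mathlib

section
/- Let m ≥ n ≥ 1, fix an n-element subset L ⊆ {1,…,m}, and let α ≥ 0 be an integer. Then ∑_K d_K · ∂_K( d_L^α ) = ( ∏_{i=0}^{n−1} (α+i) ) · d_L^α in S, where the sum ranges over all n-element subsets K of {1,…,m}. -/
open MvPolynomial

theorem pderiv_comm' {σ : Type*} {R : Type*} [CommSemiring R] (i j : σ) (f : MvPolynomial σ R) :
    pderiv i (pderiv j f) = pderiv j (pderiv i f) := by
  have h1 : ∀ a b c : σ, pderiv a ((pderiv b) (X c : MvPolynomial σ R)) = 0 := by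
    intro a b c
    rcases eq_or_ne c b with rfl | h
    · simp [pderiv_X_self]
    · simp [pderiv_X_of_ne h]
  induction f using MvPolynomial.induction_on with
  | C a => simp
  | add f g hf hg => simp [hf, hg]
  | mul_X f k hf => simp only [pderiv_mul, map_add, hf, h1]; ring

theorem pderiv_commute {σ : Type*} (a b : σ) :
    Commute ((pderiv a).toLinearMap : Module.End ℂ (MvPolynomial σ ℂ))
      ((pderiv b).toLinearMap) := by
  apply LinearMap.ext
  intro f
  exact pderiv_comm' a b f

/-- The differential operator corresponding to the monomial `m`:
the composition of the partial derivatives `∂/∂xᵢ`, each taken `m i` times. -/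
noncomputable def monOp {σ : Type*} (m : σ →₀ ℕ) : Module.End ℂ (MvPolynomial σ ℂ) :=
  m.support.noncommProd
    (fun i => ((pderiv i).toLinearMap : Module.End ℂ (MvPolynomial σ ℂ)) ^ (m i))
    (fun a _ b _ _ => (pderiv_commute a b).pow_pow _ _)

/-- The differential operator obtained from a polynomial `p` by substituting the
(commuting) partial derivative `∂/∂xᵢ` for each variable `xᵢ`, applied to `f`. -/
noncomputable def diffOp {σ : Type*} (p f : MvPolynomial σ ℂ) : MvPolynomial σ ℂ :=
  ∑ m ∈ p.support, p.coeff m • monOp m f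

/-- The maximal minor `d_K` of the generic `m × n` matrix `(x_{ij})`, on the rows
indexed by an `n`-element subset `K ⊆ {1,…,m}` taken in increasing order
(defined to be `0` if `K` does not have exactly `n` elements). -/
noncomputable def dmin (m n : ℕ) (K : Finset (Fin m)) : MvPolynomial (Fin m × Fin n) ℂ :=
  if h : K.card = n then
    Matrix.det (Matrix.of fun a j : Fin n => X ((K.orderIsoOfFin h a : Fin m), j))
  else 0

open Finset Matrix

namespace CayleyAux


/-- Leibniz rule for a finite product. -/
lemma pderiv_finset_prod {σ : Type*} {ι : Type*} [DecidableEq ι] (v : σ) (s : Finset ι)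
    (g : ι → MvPolynomial σ ℂ) :
    pderiv v (∏ i ∈ s, g i) = ∑ i ∈ s, pderiv v (g i) * ∏ j ∈ s.erase i, g j := by
  induction s using Finset.induction_on with
  | empty => simp
  | @insert a s ha IH =>
    rw [Finset.prod_insert ha, pderiv_mul, IH, Finset.sum_insert ha, Finset.erase_insert ha]
    rw [Finset.mul_sum]
    congr 1
    refine Finset.sum_congr rfl fun i hi => ?_
    rw [Finset.erase_insert_of_ne (by rintro rfl; exact ha hi)]
    rw [Finset.prod_insert (fun h => ha (Finset.mem_of_mem_erase h))]
    ring

/-- Derivative of a determinant when the variable occurs only in row `i₀`. -/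
lemma pderiv_det_row {σ : Type*} {n : ℕ} (v : σ) (i₀ : Fin n)
    (M : Matrix (Fin n) (Fin n) (MvPolynomial σ ℂ))
    (h : ∀ i, i ≠ i₀ → ∀ j, pderiv v (M i j) = 0) :
    pderiv v M.det = (M.updateRow i₀ fun j => pderiv v (M i₀ j)).det := by
  rw [det_apply, det_apply, map_sum]
  refine Finset.sum_congr rfl fun σ' _ => ?_
  have hs : (pderiv v) (Equiv.Perm.sign σ' • ∏ i, M (σ' i) i)
      = Equiv.Perm.sign σ' • (pderiv v) (∏ i, M (σ' i) i) := by
    rw [Units.smul_def, Units.smul_def, map_zsmul]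
  rw [hs]
  congr 1
  rw [pderiv_finset_prod]
  rw [Finset.sum_eq_single (σ'⁻¹ i₀)]
  · have h1 : σ' (σ'⁻¹ i₀) = i₀ := (Equiv.eq_symm_apply σ').mp rfl
    rw [← Finset.mul_prod_erase Finset.univ _ (Finset.mem_univ (σ'⁻¹ i₀))]
    congr 1
    · rw [Matrix.updateRow_apply, if_pos h1, h1]
    · refine Finset.prod_congr rfl fun j hj => ?_
      have hj' : σ' j ≠ i₀ := fun hje =>
        (Finset.mem_erase.mp hj).1 (by rw [← hje]; exact (Equiv.Perm.inv_eq_iff_eq.mpr rfl).symm)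
      rw [Matrix.updateRow_apply, if_neg hj']
  · intro i _ hi
    rw [h (σ' i) (fun he => hi (by rw [← he]; exact (Equiv.Perm.inv_eq_iff_eq.mpr rfl).symm)) i, zero_mul]
  · intro h'; exact absurd (Finset.mem_univ _) h'

/-- Derivative of a determinant none of whose entries involve `v`. -/
lemma pderiv_det_zero {σ : Type*} {n : ℕ} (v : σ) (i₀ : Fin n)
    (M : Matrix (Fin n) (Fin n) (MvPolynomial σ ℂ))
    (h : ∀ i j, pderiv v (M i j) = 0) :
    pderiv v M.det = 0 := by
  rw [pderiv_det_row v i₀ M (fun i _ j => h i j)]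
  refine Matrix.det_eq_zero_of_row_eq_zero i₀ fun j => ?_
  rw [Matrix.updateRow_self]
  exact h i₀ j

/-- Multi-linearity of `det` in one row, for a `Finset` combination. -/
lemma det_updateRow_finset_sum {n : ℕ} {R : Type*} [CommRing R] {ι : Type*} [DecidableEq ι]
    (M : Matrix (Fin n) (Fin n) R) (i₀ : Fin n) (s : Finset ι) (c : ι → R) (r : ι → Fin n → R) :
    (M.updateRow i₀ (∑ j ∈ s, c j • r j)).det = ∑ j ∈ s, c j * (M.updateRow i₀ (r j)).det := by
  induction s using Finset.induction_on with
  | empty =>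
    rw [Finset.sum_empty, Finset.sum_empty]
    refine Matrix.det_eq_zero_of_row_eq_zero i₀ fun j => ?_
    rw [Matrix.updateRow_self]; rfl
  | @insert a s ha IH =>
    rw [Finset.sum_insert ha, Finset.sum_insert ha, Matrix.det_updateRow_add,
      Matrix.det_updateRow_smul, IH]



noncomputable def pdE {σ : Type*} (v : σ) : Module.End ℂ (MvPolynomial σ ℂ) :=
  (pderiv v).toLinearMap

noncomputable def adjPD (σ : Type*) : Subalgebra ℂ (Module.End ℂ (MvPolynomial σ ℂ)) :=
  Algebra.adjoin ℂ (Set.range (pdE (σ := σ)))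

noncomputable instance (σ : Type*) : CommSemiring (adjPD σ) :=
  { (inferInstance : Semiring (adjPD σ)) with
    mul_comm := (Algebra.isMulCommutative_adjoin ℂ (by
      rintro a ⟨x, rfl⟩ b ⟨y, rfl⟩
      exact pderiv_commute x y)).is_comm.comm }

noncomputable def psi {σ : Type*} : MvPolynomial σ ℂ →ₐ[ℂ] Module.End ℂ (MvPolynomial σ ℂ) :=
  (adjPD σ).val.comp (aeval fun v => (⟨pdE v, Algebra.subset_adjoin ⟨v, rfl⟩⟩ : adjPD σ))

@[simp] lemma psi_X {σ : Type*} (v : σ) : psi (X v) = pdE v := by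
  simp [psi]

lemma psi_monomial {σ : Type*} (m : σ →₀ ℕ) (c : ℂ) :
    psi (monomial m c) = c • monOp m := by
  rw [monomial_eq, _root_.map_mul]
  have h1 : psi (C c : MvPolynomial σ ℂ) = c • (1 : Module.End ℂ (MvPolynomial σ ℂ)) := by
    simp [psi, algebraMap_eq, Algebra.algebraMap_eq_smul_one]
  have h2 : psi (m.prod fun v k => (X v : MvPolynomial σ ℂ) ^ k) = monOp m := by
    rw [Finsupp.prod]
    have : (aeval fun v => (⟨pdE v, Algebra.subset_adjoin ⟨v, rfl⟩⟩ : adjPD σ))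
        (∏ v ∈ m.support, (X v : MvPolynomial σ ℂ) ^ m v)
        = ∏ v ∈ m.support, (⟨pdE v, Algebra.subset_adjoin ⟨v, rfl⟩⟩ : adjPD σ) ^ m v := by
      rw [map_prod]
      simp
    rw [psi, AlgHom.comp_apply, this, ← Finset.noncommProd_eq_prod]
    exact Finset.map_noncommProd _ _ _ (adjPD σ).val
  rw [h1, h2, smul_mul_assoc, one_mul]

lemma diffOp_eq_psi {σ : Type*} (p f : MvPolynomial σ ℂ) : diffOp p f = psi p f := by
  suffices h : ∀ q : MvPolynomial σ ℂ, Finsupp.sum (AddMonoidAlgebra.coeff q) (fun m c => c • monOp m f) = psi q f by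
    exact ((by rw [sum_def]; rfl) : diffOp p f = Finsupp.sum (AddMonoidAlgebra.coeff p) (fun m c => c • monOp m f)).trans (h p)
  intro q
  induction q using MvPolynomial.induction_on' with
  | monomial m c =>
    rw [sum_monomial_eq (by simp), psi_monomial]
    rfl
  | add p q hp hq =>
    rw [_root_.map_add, AddMonoidAlgebra.coeff_add, Finsupp.sum_add_index' (fun _ => by simp) (fun _ b c => add_smul b c _), hp, hq]
    rfl

lemma psi_mul_apply {σ : Type*} (p q f : MvPolynomial σ ℂ) :
    psi (p * q) f = psi p (psi q f) := by
  rw [_root_.map_mul]; rfl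

@[simp] lemma psi_one_apply {σ : Type*} (f : MvPolynomial σ ℂ) : psi (1 : MvPolynomial σ ℂ) f = f := by
  rw [_root_.map_one]; rfl


@[simp] lemma pdE_apply {σ : Type*} (v : σ) (f : MvPolynomial σ ℂ) :
    pdE v f = pderiv v f := rfl


variable {m n : ℕ}

noncomputable def Xm (e : Fin n → Fin m) : Matrix (Fin n) (Fin n) (MvPolynomial (Fin m × Fin n) ℂ) :=
  Matrix.of fun a b => X (e a, b)

noncomputable def Am (e : Fin n → Fin m) (S : Finset (Fin n)) (u : Fin n → Fin n) :
    Matrix (Fin n) (Fin n) (MvPolynomial (Fin m × Fin n) ℂ) :=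
  Matrix.of fun a b => if a ∈ S then (if b = u a then 1 else 0) else X (e a, b)

noncomputable def Bm (e : Fin n → Fin m) (S : Finset (Fin n)) (u : Fin n → Fin n) :
    Matrix (Fin n) (Fin n) (MvPolynomial (Fin m × Fin n) ℂ) :=
  Matrix.of fun a b => if a ∈ S then X (e a, u b) else (if a = b then 1 else 0)

lemma updA_main (e : Fin n → Fin m) {i₀ : Fin n} {S' : Finset (Fin n)} (hi₀ : i₀ ∉ S')
    (w : Fin n → Fin n) :
    (Am e S' w).updateRow i₀ (Pi.single (w i₀) 1) = Am e (insert i₀ S') w := by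
  refine Matrix.ext fun a b => ?_
  rcases eq_or_ne a i₀ with rfl | ha
  · simp [Am, Pi.single_apply, hi₀]
  · simp [Am, Matrix.updateRow_ne ha, Finset.mem_insert, ha]

lemma updA_swap (e : Fin n → Fin m) {i₀ j : Fin n} {S' : Finset (Fin n)} (hi₀ : i₀ ∉ S')
    (hj : j ∈ S') (u : Fin n → Fin n) :
    (Am e S' u).updateRow j (Pi.single (u i₀) 1) = Am e S' (u ∘ Equiv.swap i₀ j) := by
  have hij : i₀ ≠ j := fun h => hi₀ (h ▸ hj)
  refine Matrix.ext fun a b => ?_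
  rcases eq_or_ne a j with rfl | ha
  · simp [Am, Pi.single_apply, hj, Equiv.swap_apply_right]
  · rcases eq_or_ne a i₀ with rfl | ha2
    · simp [Am, Matrix.updateRow_ne ha, hi₀]
    · rw [Matrix.updateRow_ne ha]
      simp only [Am, Matrix.of_apply]
      rcases em (a ∈ S') with h3 | h3
      · simp [h3, Equiv.swap_apply_of_ne_of_ne ha2 ha]
      · simp [h3]

lemma rowswap (e : Fin n → Fin m) {i₀ j : Fin n} {S : Finset (Fin n)} (hi₀ : i₀ ∈ S)
    (hj : j ∈ S) (hij : i₀ ≠ j) (u : Fin n → Fin n) :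
    (Am e S (u ∘ Equiv.swap i₀ j)).det = - (Am e S u).det := by
  have h : Am e S (u ∘ Equiv.swap i₀ j) = (Am e S u).submatrix (Equiv.swap i₀ j) id := by
    refine Matrix.ext fun a b => ?_
    simp only [Matrix.submatrix_apply, id_eq, Am, Matrix.of_apply, Function.comp_apply]
    rcases eq_or_ne a i₀ with rfl | ha
    · simp [Equiv.swap_apply_left, hi₀, hj]
    · rcases eq_or_ne a j with rfl | ha2
      · simp [Equiv.swap_apply_right, hi₀, hj]
      · simp only [Equiv.swap_apply_of_ne_of_ne ha ha2]
  rw [h, Matrix.det_permute, Equiv.Perm.sign_swap hij]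
  simp

/-- Expansion of `det (Bm (insert i₀ S') u)` along row `i₀`. -/
lemma Bexp (e : Fin n → Fin m) {i₀ : Fin n} {S' : Finset (Fin n)} (hi₀ : i₀ ∉ S')
    (u : Fin n → Fin n) :
    (Bm e (insert i₀ S') u).det
      = X (e i₀, u i₀) * (Bm e S' u).det
        - ∑ j ∈ S', X (e i₀, u j) * (Bm e S' (u ∘ Equiv.swap i₀ j)).det := by
  have h1 : Bm e (insert i₀ S') u = (Bm e S' u).updateRow i₀ fun b => X (e i₀, u b) := by
    refine Matrix.ext fun a b => ?_
    rcases eq_or_ne a i₀ with rfl | ha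
    · simp [Bm, Matrix.updateRow_self]
    · simp [Bm, Matrix.updateRow_ne ha, Finset.mem_insert, ha]
  have h2 : (fun b => (X (e i₀, u b) : MvPolynomial (Fin m × Fin n) ℂ))
      = ∑ j : Fin n, (X (e i₀, u j) : MvPolynomial (Fin m × Fin n) ℂ)
          • (Pi.single j 1 : Fin n → MvPolynomial (Fin m × Fin n) ℂ) := by
    funext b
    simp [Pi.single_apply]
  have h3 := det_updateRow_finset_sum (Bm e S' u) i₀ Finset.univ
    (fun j => (X (e i₀, u j) : MvPolynomial (Fin m × Fin n) ℂ))
    (fun j => (Pi.single j 1 : Fin n → MvPolynomial (Fin m × Fin n) ℂ))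
  rw [h1, h2, h3]
  -- analyze the individual determinants
  have hC0 : ((Bm e S' u).updateRow i₀ (Pi.single i₀ 1)).det = (Bm e S' u).det := by
    have : (Bm e S' u).updateRow i₀ (Pi.single i₀ 1) = Bm e S' u := by
      refine Matrix.ext fun a b => ?_
      rcases eq_or_ne a i₀ with rfl | ha
      · simp [Bm, Pi.single_apply, hi₀, eq_comm]
      · rw [Matrix.updateRow_ne ha]
    rw [this]
  have hCout : ∀ j, j ∉ insert i₀ S' →
      ((Bm e S' u).updateRow i₀ (Pi.single j 1)).det = 0 := by
    intro j hjo
    have hji : i₀ ≠ j := fun h => hjo (h ▸ Finset.mem_insert_self i₀ S')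
    refine Matrix.det_zero_of_row_eq hji ?_
    funext b
    rw [Matrix.updateRow_self, Matrix.updateRow_ne (Ne.symm hji)]
    have hjS : j ∉ S' := fun h => hjo (Finset.mem_insert_of_mem h)
    simp [Bm, hjS, Pi.single_apply, eq_comm]
  have hCin : ∀ j ∈ S',
      ((Bm e S' u).updateRow i₀ (Pi.single j 1)).det
        = - (Bm e S' (u ∘ Equiv.swap i₀ j)).det := by
    intro j hj
    have hij : i₀ ≠ j := fun h => hi₀ (h ▸ hj)
    have hperm : Bm e S' (u ∘ Equiv.swap i₀ j)
        = ((Bm e S' u).updateRow i₀ (Pi.single j 1)).submatrix id (Equiv.swap i₀ j) := by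
      refine Matrix.ext fun a b => ?_
      simp only [Matrix.submatrix_apply, id_eq]
      rcases eq_or_ne a i₀ with h | ha
      · rw [h]
        rw [Matrix.updateRow_self]
        have hbi : Equiv.swap i₀ j b = j ↔ b = i₀ := by
          constructor
          · intro h
            have h2 := congrArg (Equiv.swap i₀ j) h
            rwa [Equiv.swap_apply_self, Equiv.swap_apply_right] at h2
          · rintro rfl; exact Equiv.swap_apply_left _ _
        simp only [Bm, Matrix.of_apply, if_neg hi₀, Pi.single_apply, hbi]
        simp [eq_comm]

      · rw [Matrix.updateRow_ne ha]
        simp only [Bm, Matrix.of_apply, Function.comp_apply]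
        rcases em (a ∈ S') with h3 | h3
        · simp [h3]
        · have haj : a ≠ j := fun h => h3 (h ▸ hj)
          have hiff : a = Equiv.swap i₀ j b ↔ a = b := by
            constructor
            · intro h
              have h2 := congrArg (Equiv.swap i₀ j) h
              rwa [Equiv.swap_apply_self, Equiv.swap_apply_of_ne_of_ne ha haj] at h2
            · rintro rfl; exact (Equiv.swap_apply_of_ne_of_ne ha haj).symm
          simp [h3, hiff]
    rw [hperm, Matrix.det_permute', Equiv.Perm.sign_swap hij]
    simp
  rw [← Finset.sum_subset (Finset.subset_univ (insert i₀ S'))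
    (fun j _ hjo => by rw [hCout j hjo, mul_zero])]
  rw [Finset.sum_insert hi₀, hC0]
  rw [Finset.sum_congr rfl (fun j hj => by rw [hCin j hj, mul_neg])]
  rw [Finset.sum_neg_distrib, ← sub_eq_add_neg]

/-- The Plücker-type adjugate identity. -/
lemma adj_identity (e : Fin n → Fin m) {i₀ : Fin n} {S' : Finset (Fin n)} (hi₀ : i₀ ∉ S')
    (u : Fin n → Fin n) :
    (Am e S' u).det * adjugate (Xm e) (u i₀) i₀
      = (∑ j ∈ S', (Am e S' (u ∘ Equiv.swap i₀ j)).det * adjugate (Xm e) (u j) i₀)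
        + (Am e (insert i₀ S') u).det * (Xm e).det := by
  set N := Am e S' u with hN
  set Y := Xm e with hY
  have assoc : ((adjugate N * N) * adjugate Y) (u i₀) i₀
      = (adjugate N * (N * adjugate Y)) (u i₀) i₀ := by
    rw [Matrix.mul_assoc]
  rw [Matrix.adjugate_mul, Matrix.smul_mul, Matrix.one_mul, Matrix.smul_apply, smul_eq_mul] at assoc
  rw [assoc, Matrix.mul_apply]
  have hNY : ∀ j, j ∉ S' → (N * adjugate Y) j i₀ = if j = i₀ then Y.det else 0 := by
    intro j hj
    have hrow : ∀ b, N j b = Y j b := fun b => by simp [hN, Am, hj, hY, Xm]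
    have : (N * adjugate Y) j i₀ = (Y * adjugate Y) j i₀ := by
      rw [Matrix.mul_apply, Matrix.mul_apply]
      exact Finset.sum_congr rfl fun b _ => by rw [hrow b]
    rw [this, Matrix.mul_adjugate, Matrix.smul_apply, Matrix.one_apply, smul_eq_mul]
    split_ifs <;> simp
  have hNY' : ∀ j ∈ S', (N * adjugate Y) j i₀ = adjugate Y (u j) i₀ := by
    intro j hj
    rw [Matrix.mul_apply]
    have hrow : ∀ b, N j b = if b = u j then 1 else 0 := fun b => by simp [hN, Am, hj]
    rw [Finset.sum_congr rfl fun b _ => by rw [hrow b]]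
    simp [ite_mul]
  rw [← Finset.sum_subset (Finset.subset_univ (insert i₀ S'))
    (fun j _ hjo => by
      rw [hNY j (fun h => hjo (Finset.mem_insert_of_mem h)),
        if_neg (fun h => hjo (by rw [h]; exact Finset.mem_insert_self i₀ S')), mul_zero])]
  rw [Finset.sum_insert hi₀]
  have hterm0 : adjugate N (u i₀) i₀ * (N * adjugate Y) i₀ i₀
      = (Am e (insert i₀ S') u).det * Y.det := by
    rw [hNY i₀ hi₀, if_pos rfl, Matrix.adjugate_apply, updA_main e hi₀ u]
  have hterm : ∀ j ∈ S', adjugate N (u i₀) j * (N * adjugate Y) j i₀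
      = (Am e S' (u ∘ Equiv.swap i₀ j)).det * adjugate Y (u j) i₀ := by
    intro j hj
    rw [hNY' j hj, Matrix.adjugate_apply, updA_swap e hi₀ hj u]
  rw [hterm0, Finset.sum_congr rfl hterm, add_comm]

/-- `∂/∂x_{(e i₀, c)}` of `det (Xm e)` is an adjugate entry. -/
lemma pd_XF {e : Fin n → Fin m} (he : Function.Injective e) (i₀ : Fin n) (c : Fin n) :
    pderiv (e i₀, c) (Xm e).det = adjugate (Xm e) c i₀ := by
  rw [pderiv_det_row (e i₀, c) i₀ (Xm e) (fun i hi j => by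
    refine pderiv_X_of_ne (fun h => hi (he ?_))
    exact congrArg Prod.fst h)]
  have hrow : (fun j => pderiv (e i₀, c) ((Xm e) i₀ j))
      = (Pi.single c 1 : Fin n → MvPolynomial (Fin m × Fin n) ℂ) := by
    funext b
    simp only [Xm, Matrix.of_apply]
    rcases eq_or_ne b c with rfl | hb
    · simp [Pi.single_apply]
    · rw [pderiv_X_of_ne (fun h => hb (congrArg Prod.snd h))]
      simp [Pi.single_apply, hb]
  rw [hrow, Matrix.adjugate_apply]

/-- `∂/∂x_{(e i₀, c)}` of `det (Am e S' w)`, for `i₀ ∉ S'`. -/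
lemma pd_detA {e : Fin n → Fin m} (he : Function.Injective e) {i₀ : Fin n}
    {S' : Finset (Fin n)} (hi₀ : i₀ ∉ S') (w : Fin n → Fin n) (c : Fin n) :
    pderiv (e i₀, c) (Am e S' w).det
      = ((Am e S' w).updateRow i₀ (Pi.single c 1)).det := by
  rw [pderiv_det_row (e i₀, c) i₀ (Am e S' w) (fun i hi j => by
    simp only [Am, Matrix.of_apply]
    rcases em (i ∈ S') with h | h
    · simp only [if_pos h]
      split_ifs <;> simp [pderiv_one]
    · simp only [if_neg h]
      exact pderiv_X_of_ne (fun h2 => hi (he (congrArg Prod.fst h2))))]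
  have hrow : (fun j => pderiv (e i₀, c) ((Am e S' w) i₀ j))
      = (Pi.single c 1 : Fin n → MvPolynomial (Fin m × Fin n) ℂ) := by
    funext b
    simp only [Am, Matrix.of_apply, if_neg hi₀]
    rcases eq_or_ne b c with rfl | hb
    · simp [Pi.single_apply]
    · rw [pderiv_X_of_ne (fun h => hb (congrArg Prod.snd h))]
      simp [Pi.single_apply, hb]
  rw [hrow]

/-- The cast-power helper. -/
lemma cast_pow_helper {R : Type*} [CommRing R] (F : R) (p : ℕ) :
    (p : R) * F ^ (p - 1) * F = (p : R) * F ^ p := by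
  rcases p with _ | q
  · simp
  · simp only [Nat.add_sub_cancel]
    rw [mul_assoc, ← pow_succ]

/-- Final ring computation for the induction step. -/
lemma final_alg {R : Type*} [CommRing R] {ι : Type*} (S' : Finset ι) (A c F y₀ : R)
    (dd yy : ι → R) (α : ℕ) (hα : 1 ≤ α) (r' : ℕ)
    (hadj : c * y₀ = (∑ j ∈ S', dd j * yy j) + A * F) :
    r' • (A * F ^ (α - 1) + c * (↑(α - 1) * F ^ (α - 1 - 1) * y₀))
      - ∑ j ∈ S', r' • (-A * F ^ (α - 1) + dd j * (↑(α - 1) * F ^ (α - 1 - 1) * yy j))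
    = (r' * (α + S'.card)) • (A * F ^ (α - 1)) := by
  simp only [nsmul_eq_mul, mul_add, Finset.sum_add_distrib]
  rw [Finset.sum_const, nsmul_eq_mul]
  have hsum2 : ∑ j ∈ S', (r' : R) * (dd j * (↑(α - 1) * F ^ (α - 1 - 1) * yy j))
      = (r' : R) * (↑(α - 1) * F ^ (α - 1 - 1)) * ∑ j ∈ S', dd j * yy j := by
    rw [Finset.mul_sum]
    exact Finset.sum_congr rfl fun j _ => by ring
  rw [hsum2]
  have hc := cast_pow_helper F (α - 1)
  have hcast : ((α - 1 : ℕ) : R) = (α : R) - 1 := by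
    push_cast [Nat.cast_sub hα]; ring
  rw [hcast] at hc ⊢
  push_cast
  linear_combination ((r' : R) * ((α : R) - 1) * F ^ (α - 1 - 1)) * hadj
    + (r' : R) * A * hc

/-- The key inductive identity (Cayley identity for minors, sign-free form). -/
theorem star (e : Fin n → Fin m) (he : Function.Injective e) (α : ℕ) (hα : 1 ≤ α)
    (S : Finset (Fin n)) :
    ∀ u : Fin n → Fin n,
      psi (Bm e S u).det ((Xm e).det ^ α)
        = (∏ t ∈ Finset.range S.card, (α + t)) •
            ((Am e S u).det * (Xm e).det ^ (α - 1)) := by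
  induction S using Finset.induction_on with
  | empty =>
    intro u
    have hB : Bm e ∅ u = 1 := by
      refine Matrix.ext fun a b => ?_
      simp [Bm, Matrix.one_apply]
    have hA : Am e ∅ u = Xm e := by
      refine Matrix.ext fun a b => ?_
      simp [Am, Xm]
    rw [hB, Matrix.det_one, _root_.map_one, hA]
    rw [Finset.card_empty, Finset.range_zero, Finset.prod_empty, one_smul]
    rw [Module.End.one_apply]
    conv_lhs => rw [← Nat.succ_pred_eq_of_pos hα]
    rw [pow_succ', Nat.pred_eq_sub_one]
  | @insert i₀ S' hi₀ IH =>
    intro u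
    have expand : psi (Bm e (insert i₀ S') u).det ((Xm e).det ^ α)
        = pdE (e i₀, u i₀) (psi (Bm e S' u).det ((Xm e).det ^ α))
          - ∑ j ∈ S', pdE (e i₀, u j)
              (psi (Bm e S' (u ∘ Equiv.swap i₀ j)).det ((Xm e).det ^ α)) := by
      rw [Bexp e hi₀ u, map_sub, _root_.map_mul, psi_X, map_sum]
      rw [LinearMap.sub_apply, LinearMap.sum_apply, Module.End.mul_apply]
      congr 1
      refine Finset.sum_congr rfl fun j hj => ?_
      rw [_root_.map_mul, psi_X, Module.End.mul_apply]
    rw [expand, IH u, Finset.sum_congr rfl (fun j hj => by rw [IH (u ∘ Equiv.swap i₀ j)])]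
    -- derivative of the IH right-hand side
    have key : ∀ w : Fin n → Fin n,
        pdE (e i₀, w i₀) ((∏ t ∈ Finset.range S'.card, (α + t)) •
            ((Am e S' w).det * (Xm e).det ^ (α - 1)))
          = (∏ t ∈ Finset.range S'.card, (α + t)) •
              ((Am e (insert i₀ S') w).det * (Xm e).det ^ (α - 1)
                + (Am e S' w).det * (↑(α - 1) * (Xm e).det ^ (α - 1 - 1)
                    * adjugate (Xm e) (w i₀) i₀)) := by
      intro w
      rw [map_nsmul]
      congr 1
      rw [pdE_apply, pderiv_mul, pd_detA he hi₀ w (w i₀), updA_main e hi₀ w, pderiv_pow,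
        pd_XF he i₀ (w i₀)]
    rw [key u]
    have hsum : ∑ j ∈ S', pdE (e i₀, u j)
          ((∏ t ∈ Finset.range S'.card, (α + t)) •
            ((Am e S' (u ∘ Equiv.swap i₀ j)).det * (Xm e).det ^ (α - 1)))
        = ∑ j ∈ S', (∏ t ∈ Finset.range S'.card, (α + t)) •
            (-(Am e (insert i₀ S') u).det * (Xm e).det ^ (α - 1)
              + (Am e S' (u ∘ Equiv.swap i₀ j)).det
                  * (↑(α - 1) * (Xm e).det ^ (α - 1 - 1) * adjugate (Xm e) (u j) i₀)) := by
      refine Finset.sum_congr rfl fun j hj => ?_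
      have hswap : (u ∘ Equiv.swap i₀ j) i₀ = u j := by simp [Equiv.swap_apply_left]
      have k2 := key (u ∘ Equiv.swap i₀ j)
      rw [hswap] at k2
      rw [k2, rowswap e (Finset.mem_insert_self i₀ S') (Finset.mem_insert_of_mem hj)
        (fun h => hi₀ (h ▸ hj)) u]
    rw [hsum]
    rw [Finset.card_insert_of_notMem hi₀, Finset.prod_range_succ]
    exact final_alg S' (Am e (insert i₀ S') u).det (Am e S' u).det (Xm e).det
      (adjugate (Xm e) (u i₀) i₀) (fun j => (Am e S' (u ∘ Equiv.swap i₀ j)).det)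
      (fun j => adjugate (Xm e) (u j) i₀) α hα _ (adj_identity e hi₀ u)

lemma vanish {m n : ℕ} (eK : Fin n → Fin m) (g : MvPolynomial (Fin m × Fin n) ℂ)
    (b₀ : Fin n) (h : ∀ a : Fin n, pderiv (eK b₀, a) g = 0) :
    psi (Xm eK).det g = 0 := by
  rw [Matrix.det_apply, map_sum, LinearMap.sum_apply]
  refine Finset.sum_eq_zero fun σ' _ => ?_
  have hz : psi (∏ a, Xm eK (σ' a) a) g = 0 := by
    rw [← Finset.prod_erase_mul Finset.univ _ (Finset.mem_univ (σ'⁻¹ b₀))]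
    have hx : Xm eK (σ' (σ'⁻¹ b₀)) (σ'⁻¹ b₀) = X (eK b₀, σ'⁻¹ b₀) := by
      rw [show σ' (σ'⁻¹ b₀) = b₀ from (Equiv.eq_symm_apply σ').mp rfl]; rfl
    rw [_root_.map_mul, Module.End.mul_apply, hx, psi_X, pdE_apply, h, map_zero]
  rw [Units.smul_def, map_zsmul, LinearMap.smul_apply, hz, smul_zero]

theorem maximal_minors_cayley_identity_aux (m n : ℕ) (hn : 1 ≤ n) (hmn : n ≤ m)
    (L : Finset (Fin m)) (hL : L.card = n) (α : ℕ) :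
    ∑ K ∈ Finset.powersetCard n (Finset.univ : Finset (Fin m)),
      dmin m n K * diffOp (dmin m n K) (dmin m n L ^ α)
    = (∏ i ∈ Finset.range n, (α + i)) • dmin m n L ^ α := by
  classical
  have hLmem : L ∈ Finset.powersetCard n (Finset.univ : Finset (Fin m)) :=
    Finset.mem_powersetCard.mpr ⟨Finset.subset_univ L, hL⟩
  set eL : Fin n → Fin m := fun a => ((L.orderIsoOfFin hL a : Fin m)) with heL
  have heLinj : Function.Injective eL := fun a b h =>
    (L.orderIsoOfFin hL).injective (Subtype.coe_injective h)
  have hdL : dmin m n L = (Xm eL).det := by rw [dmin, dif_pos hL]; rfl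
  have hLvar : ∀ (i : Fin m), i ∉ L → ∀ (c : Fin n) (β : ℕ),
      pderiv (i, c) ((Xm eL).det ^ β) = 0 := by
    intro i hiL c β
    rw [pderiv_pow, pderiv_det_zero (i, c) ⟨0, hn⟩ (Xm eL) (fun r b => ?_), mul_zero]
    refine pderiv_X_of_ne fun h => hiL ?_
    have h1 : eL r = i := congrArg Prod.fst h
    rw [← h1]
    exact (L.orderIsoOfFin hL r).2
  rcases Nat.eq_zero_or_pos α with rfl | hα
  · rw [pow_zero]
    rw [Finset.sum_eq_zero (fun K hK => ?_), show ∏ i ∈ Finset.range n, (0 + i) = 0 from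
      Finset.prod_eq_zero (Finset.mem_range.mpr hn) rfl, zero_smul]
    obtain ⟨-, hKc⟩ := Finset.mem_powersetCard.mp hK
    have hdK : dmin m n K = (Xm (fun a => ((K.orderIsoOfFin hKc a : Fin m)))).det := by
      rw [dmin, dif_pos hKc]; rfl
    rw [hdK, diffOp_eq_psi, vanish _ _ ⟨0, hn⟩ (fun a => pderiv_one), mul_zero]
  · rw [Finset.sum_eq_single_of_mem L hLmem (fun K hK hKL => ?_)]
    · rw [hdL, diffOp_eq_psi]
      have hB : Bm eL Finset.univ id = Xm eL := by
        refine Matrix.ext fun a b => ?_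
        simp [Bm, Xm]
      have hA : Am eL Finset.univ id = 1 := by
        refine Matrix.ext fun a b => ?_
        simp [Am, Matrix.one_apply, eq_comm]
      have hstar := star eL heLinj α hα Finset.univ id
      rw [hB, hA, Matrix.det_one, one_mul, Finset.card_univ, Fintype.card_fin] at hstar
      rw [hstar, mul_smul_comm, ← pow_succ', Nat.sub_add_cancel hα]
    · obtain ⟨-, hKc⟩ := Finset.mem_powersetCard.mp hK
      have hns : ¬ K ⊆ L := fun hsub =>
        hKL (Finset.eq_of_subset_of_card_le hsub (by rw [hL, hKc]))
      obtain ⟨i, hiK, hiL⟩ := Finset.not_subset.mp hns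
      set eK : Fin n → Fin m := fun a => ((K.orderIsoOfFin hKc a : Fin m)) with heK
      have hdK : dmin m n K = (Xm eK).det := by rw [dmin, dif_pos hKc]; rfl
      set b₀ : Fin n := (K.orderIsoOfFin hKc).symm ⟨i, hiK⟩ with hb₀
      have hKb : eK b₀ = i := by
        rw [heK, hb₀]
        simp
      rw [hdK, diffOp_eq_psi, vanish eK _ b₀ (fun a => ?_), mul_zero]
      rw [hdL, hKb]
      exact hLvar i hiL a α

end CayleyAux

/-- For a fixed `n`-element subset `L ⊆ {1,…,m}` and an integer `α ≥ 0`,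
`∑_K d_K ⬝ ∂_K(d_L^α) = (∏_{i=0}^{n-1} (α+i)) ⬝ d_L^α`. -/
theorem maximal_minors_cayley_identity (m n : ℕ) (hn : 1 ≤ n) (hmn : n ≤ m)
    (L : Finset (Fin m)) (hL : L.card = n) (α : ℕ) :
    ∑ K ∈ Finset.powersetCard n (Finset.univ : Finset (Fin m)),
      dmin m n K * diffOp (dmin m n K) (dmin m n L ^ α)
    = (∏ i ∈ Finset.range n, (α + i)) • dmin m n L ^ α :=
  CayleyAux.maximal_minors_cayley_identity_aux m n hn hmn L hL α
end

section
/- Let n ≥ 1 and let U = { u : u a skew-symmetric (2n+1)×(2n+1) complex matrix with u_{12} ≠ 0 }. Define π(u) = (t, c, r, M) by t = u_{12}, c = (u_{13},…,u_{1,2n+1}), r = (u_{23},…,u_{2,2n+1}), and M the (2n−1)×(2n−1) matrix with M_{ij} = Pf_{{1,2,i+2,j+2}}(u)/u_{12} = u_{i+2,j+2} − (u_{1,i+2}·u_{2,j+2} − u_{1,j+2}·u_{2,i+2})/u_{12} for 1 ≤ i,j ≤ 2n−1, where Pf_{{1,2,i+2,j+2}}(u) is the Pfaffian of the principal 4×4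 skew-symmetric submatrix of u on rows and columns 1,2,i+2,j+2. Then M is skew-symmetric, π is a bijection from U onto ℂ* × ℂ^{2n−1} × ℂ^{2n−1} × { skew-symmetric (2n−1)×(2n−1) complex matrices }, and π restricts to a bijection from { u ∈ U : rank(u) ≤ 2n−2 } onto ℂ* × ℂ^{2n−1} × ℂ^{2n−1} × { skew-symmetric M : rank(M) ≤ 2n−4 }. -/
open Matrix Module

namespace PfAux


lemma finrank_submodule_prod {M N : Type*} [AddCommGroup M] [AddCommGroup N]
    [Module ℂ M] [Module ℂ N] [FiniteDimensional ℂ M] [FiniteDimensional ℂ N]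
    (p : Submodule ℂ M) (q : Submodule ℂ N) :
    finrank ℂ (p.prod q) = finrank ℂ p + finrank ℂ q := by
  have e : (p.prod q) ≃ₗ[ℂ] p × q :=
    { toFun := fun x => (⟨x.1.1, x.2.1⟩, ⟨x.1.2, x.2.2⟩)
      map_add' := fun _ _ => rfl
      map_smul' := fun _ _ => rfl
      invFun := fun y => ⟨(y.1.1, y.2.1), ⟨y.1.2, y.2.2⟩⟩
      left_inv := fun _ => rfl
      right_inv := fun _ => rfl }
  rw [e.finrank_eq, Module.finrank_prod]

lemma rank_fromBlocks_diag {l m : Type*} [Fintype l] [Fintype m] [DecidableEq l] [DecidableEq m]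
    (A : Matrix l l ℂ) (B : Matrix m m ℂ) :
    (fromBlocks A 0 0 B).rank = A.rank + B.rank := by
  let E := LinearEquiv.sumArrowLequivProdArrow l m ℂ ℂ
  have hcomp : (fromBlocks A 0 0 B).mulVecLin =
      E.symm.toLinearMap ∘ₗ (A.mulVecLin.prodMap B.mulVecLin) ∘ₗ E.toLinearMap := by
    apply LinearMap.ext; intro v
    funext x
    cases x <;>
      simp [Matrix.mulVec, Matrix.mulVecLin_apply, dotProduct, Fintype.sum_sum_type, E,
        LinearEquiv.sumArrowLequivProdArrow, Equiv.sumArrowEquivProdArrow, Function.comp]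
  have hrange : LinearMap.range (A.mulVecLin.prodMap B.mulVecLin) =
      (LinearMap.range A.mulVecLin).prod (LinearMap.range B.mulVecLin) := by
    apply le_antisymm
    · rintro _ ⟨x, rfl⟩
      exact ⟨⟨x.1, rfl⟩, ⟨x.2, rfl⟩⟩
    · rintro ⟨a, b⟩ ⟨⟨x, hx⟩, ⟨y, hy⟩⟩
      exact ⟨(x, y), by simp [LinearMap.prodMap_apply, hx, hy]⟩
  rw [Matrix.rank, hcomp, LinearMap.range_comp, LinearEquiv.finrank_map_eq,
    LinearMap.range_comp_of_range_eq_top _ (LinearEquiv.range E), hrange]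
  exact finrank_submodule_prod _ _



variable {n : ℕ}

def idx (hn : 1 ≤ n) (j : Fin (2*n+1)) : Fin (2*n-1) := ⟨j.1 - 2, by have := j.2; omega⟩
def emb (a : Fin (2*n-1)) : Fin (2*n+1) := ⟨a.1 + 2, by have := a.2; omega⟩

lemma idx_emb (hn : 1 ≤ n) (a : Fin (2*n-1)) : idx hn (emb a) = a := by
  simp [idx, emb]

lemma val_zero' (hn : 1 ≤ n) : (0 : Fin (2*n+1)).val = 0 := rfl

lemma val_one' (hn : 1 ≤ n) : (1 : Fin (2*n+1)).val = 1 := by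
  rw [Fin.val_one']; exact Nat.mod_eq_of_lt (by omega)

lemma cases3 (hn : 1 ≤ n) (i : Fin (2*n+1)) :
    i = 0 ∨ i = 1 ∨ ∃ a : Fin (2*n-1), i = emb a := by
  rcases Nat.lt_or_ge i.1 2 with h | h
  · interval_cases hi : i.1
    · exact Or.inl (Fin.ext (by simp [val_zero' hn, hi]))
    · exact Or.inr (Or.inl (Fin.ext (by rw [val_one' hn, hi])))
  · exact Or.inr (Or.inr ⟨⟨i.1 - 2, by have := i.2; omega⟩, Fin.ext (by simp [emb]; omega)⟩)

/-- The matrix built from the data `(t, c, r, M)`. -/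
noncomputable def bmat (hn : 1 ≤ n) (t : ℂ) (c r : Fin (2*n-1) → ℂ)
    (M : Matrix (Fin (2*n-1)) (Fin (2*n-1)) ℂ) : Matrix (Fin (2*n+1)) (Fin (2*n+1)) ℂ :=
  Matrix.of fun i j =>
    if i.1 = 0 then (if j.1 = 0 then 0 else if j.1 = 1 then t else c (idx hn j))
    else if i.1 = 1 then (if j.1 = 0 then -t else if j.1 = 1 then 0 else r (idx hn j))
    else (if j.1 = 0 then -c (idx hn i) else if j.1 = 1 then -r (idx hn i) else
      M (idx hn i) (idx hn j) + (c (idx hn i) * r (idx hn j) - c (idx hn j) * r (idx hn i))/t)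

variable (hn : 1 ≤ n) (t : ℂ) (c r : Fin (2*n-1) → ℂ) (M : Matrix (Fin (2*n-1)) (Fin (2*n-1)) ℂ)

lemma emb_val_ne0 (a : Fin (2*n-1)) : (emb a).val ≠ 0 := by simp [emb]

lemma emb_val_ne1 (a : Fin (2*n-1)) : (emb a).val ≠ 1 := by simp [emb]

lemma emb_ne_zero (a : Fin (2*n-1)) : emb a ≠ 0 := fun h => emb_val_ne0 a (by rw [h]; rfl)

lemma bmat_00 : bmat hn t c r M 0 0 = 0 := by
  simp [bmat, val_zero' hn]

lemma bmat_01 : bmat hn t c r M 0 1 = t := by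
  have h0 : ¬ n = 0 := by omega
  simp [bmat, val_zero' hn, val_one' hn, h0, hn]

lemma bmat_10 : bmat hn t c r M 1 0 = -t := by
  have h0 : ¬ n = 0 := by omega
  simp [bmat, val_zero' hn, val_one' hn, h0, hn]

lemma bmat_11 : bmat hn t c r M 1 1 = 0 := by
  have h0 : ¬ n = 0 := by omega
  have hp : 0 < n := by omega
  simp [bmat, val_one' hn, h0, hp]

lemma bmat_0e (a : Fin (2*n-1)) : bmat hn t c r M 0 (emb a) = c a := by
  simp [bmat, val_zero' hn, emb_val_ne0, emb_val_ne1, idx_emb, emb_ne_zero]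

lemma bmat_1e (a : Fin (2*n-1)) : bmat hn t c r M 1 (emb a) = r a := by
  have h0 : ¬ n = 0 := by omega
  simp [bmat, val_one' hn, emb_val_ne0, emb_val_ne1, idx_emb, h0, hn, emb_ne_zero,
    (by omega : 0 < n)]

lemma bmat_e0 (a : Fin (2*n-1)) : bmat hn t c r M (emb a) 0 = -c a := by
  simp [bmat, val_zero' hn, emb_val_ne0, emb_val_ne1, idx_emb, emb_ne_zero]

lemma bmat_e1 (a : Fin (2*n-1)) : bmat hn t c r M (emb a) 1 = -r a := by
  have h0 : ¬ n = 0 := by omega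
  simp [bmat, val_one' hn, val_zero' hn, emb_val_ne0, emb_val_ne1, idx_emb, h0, hn,
    emb_ne_zero, (by omega : 0 < n)]

lemma bmat_ee (a b : Fin (2*n-1)) : bmat hn t c r M (emb a) (emb b) =
    M a b + (c a * r b - c b * r a)/t := by
  simp [bmat, emb_val_ne0, emb_val_ne1, idx_emb, emb_ne_zero]

lemma bmat_skew (hM : Mᵀ = -M) : (bmat hn t c r M)ᵀ = -(bmat hn t c r M) := by
  have hM' : ∀ a b, M b a = -M a b := fun a b => by
    have := congrFun (congrFun hM a) b; simpa using this
  ext i j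
  rcases cases3 hn i with rfl | rfl | ⟨a, rfl⟩ <;> rcases cases3 hn j with rfl | rfl | ⟨b, rfl⟩ <;>
    simp only [transpose_apply, Matrix.neg_apply, bmat_00, bmat_01, bmat_10, bmat_11, bmat_0e,
      bmat_1e, bmat_e0, bmat_e1, bmat_ee] <;> try ring
  rw [hM' a b]; ring

lemma bmat_ne0 (ht : t ≠ 0) : bmat hn t c r M 0 1 ≠ 0 := by
  rw [bmat_01]; exact ht

section VecHelpers

variable {l m o : Type*}

lemma vecMulVec_mul' [Fintype m] (x : l → ℂ) (y : m → ℂ) (N : Matrix m o ℂ) :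
    vecMulVec x y * N = vecMulVec x (y ᵥ* N) := by
  ext i j
  simp [vecMulVec_apply, mul_apply, vecMul, dotProduct, Finset.mul_sum, mul_assoc]

lemma mul_vecMulVec' [Fintype m] (N : Matrix l m ℂ) (x : m → ℂ) (y : o → ℂ) :
    N * vecMulVec x y = vecMulVec (N *ᵥ x) y := by
  ext i j
  simp [vecMulVec_apply, mul_apply, mulVec, dotProduct, Finset.sum_mul, mul_assoc]

lemma vecMulVec_transpose' (x : l → ℂ) (y : m → ℂ) : (vecMulVec x y)ᵀ = vecMulVec y x := by
  ext i j; simp [vecMulVec_apply, mul_comm]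

lemma vecMulVec_mulVec' [Fintype m] (x : l → ℂ) (y : m → ℂ) (z : m → ℂ) :
    vecMulVec x y *ᵥ z = (y ⬝ᵥ z) • x := by
  ext i
  simp only [Matrix.mulVec, dotProduct, Matrix.vecMulVec_apply, Pi.smul_apply,
    smul_eq_mul, Matrix.of_apply]
  rw [Finset.sum_mul]
  exact Finset.sum_congr rfl fun j _ => by ring

lemma vecMulVec_zero_right (x : l → ℂ) : vecMulVec x (0 : m → ℂ) = 0 := by
  ext i j; simp [vecMulVec_apply]

lemma vecMulVec_smul_left (a : ℂ) (x : l → ℂ) (y : m → ℂ) :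
    vecMulVec (a • x) y = a • vecMulVec x y := by
  ext i j; simp [vecMulVec_apply, mul_assoc]

end VecHelpers

lemma bmat_rank (hn : 1 ≤ n) (t : ℂ) (ht : t ≠ 0) (c r : Fin (2*n-1) → ℂ)
    (M : Matrix (Fin (2*n-1)) (Fin (2*n-1)) ℂ) :
    (bmat hn t c r M).rank = M.rank + 2 := by
  classical
  set u := bmat hn t c r M with hu
  set A : Fin (2*n+1) → ℂ := fun i => if 2 ≤ i.1 then r (idx hn i) / t else 0 with hA
  set B : Fin (2*n+1) → ℂ := fun i => if 2 ≤ i.1 then -(c (idx hn i)) / t else 0 with hB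
  have hA0 : A 0 = 0 := by simp [hA, val_zero' hn]
  have hmod : 1 % (2*n+1) = 1 := Nat.mod_eq_of_lt (by omega)
  have hA1 : A 1 = 0 := by rw [hA]; simp [hmod]
  have hB0 : B 0 = 0 := by simp [hB, val_zero' hn]
  have hB1 : B 1 = 0 := by rw [hB]; simp [hmod]
  have hAe : ∀ a, A (emb a) = r a / t := by
    intro a; simp [hA, emb, idx_emb hn, idx]
  have hBe : ∀ a, B (emb a) = -(c a) / t := by
    intro a; simp [hB, emb, idx_emb hn, idx]
  set s0 : Fin (2*n+1) → ℂ := Pi.single 0 1 with hs0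
  set s1 : Fin (2*n+1) → ℂ := Pi.single 1 1 with hs1
  set F := vecMulVec A s0 + vecMulVec B s1 with hF
  -- F * F = 0
  have hrow0 : s0 ᵥ* F = 0 := by
    rw [hs0, single_one_vecMul]
    funext j
    simp [hF, vecMulVec_apply, hA0, hB0]
  have hrow1 : s1 ᵥ* F = 0 := by
    rw [hs1, single_one_vecMul]
    funext j
    simp [hF, vecMulVec_apply, hA1, hB1]
  have hFF : F * F = 0 := by
    conv_lhs => rw [hF, add_mul, vecMulVec_mul', vecMulVec_mul', ← hF, hrow0, hrow1]
    rw [vecMulVec_zero_right, vecMulVec_zero_right, add_zero]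
  have hE1 : (1 + F) * (1 - F) = 1 := by
    have : (1 + F) * (1 - F) = 1 - F * F := by noncomm_ring
    rw [this, hFF, sub_zero]
  have hE2 : (1 - F) * (1 + F) = 1 := by
    have : (1 - F) * (1 + F) = 1 - F * F := by noncomm_ring
    rw [this, hFF, sub_zero]
  have hEunit : IsUnit (1 + F) := ⟨⟨1 + F, 1 - F, hE1, hE2⟩, rfl⟩
  have hEdet : IsUnit (1 + F).det := (Matrix.isUnit_iff_isUnit_det _).mp hEunit
  have hETdet : IsUnit (1 + F)ᵀ.det := by rwa [Matrix.det_transpose]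
  -- the key identity
  have hFu : F * u = vecMulVec A (u 0) + vecMulVec B (u 1) := by
    rw [hF, add_mul, vecMulVec_mul', vecMulVec_mul', hs0, hs1,
      single_one_vecMul, single_one_vecMul]; rfl
  have hFT : Fᵀ = vecMulVec s0 A + vecMulVec s1 B := by
    rw [hF, transpose_add, vecMulVec_transpose', vecMulVec_transpose']
  have huFT : u * Fᵀ = vecMulVec (uᵀ 0) A + vecMulVec (uᵀ 1) B := by
    rw [hFT, mul_add, mul_vecMulVec', mul_vecMulVec', hs0, hs1,
      mulVec_single_one, mulVec_single_one]; rfl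
  have hFmv : ∀ x : Fin (2*n+1) → ℂ, F *ᵥ x = (x 0) • A + (x 1) • B := by
    intro x
    rw [hF, add_mulVec, vecMulVec_mulVec', vecMulVec_mulVec', hs0, hs1,
      single_dotProduct, single_dotProduct, one_mul, one_mul]
  have key : (1 + F) * u * (1 + F)ᵀ =
      u + (vecMulVec A (u 0) + vecMulVec B (u 1)) +
        ((vecMulVec (uᵀ 0) A + vecMulVec (uᵀ 1) B) +
          (vecMulVec ((uᵀ 0 0) • A + (uᵀ 0 1) • B) A +
           vecMulVec ((uᵀ 1 0) • A + (uᵀ 1 1) • B) B)) := by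
    have expand : (1 + F) * u * (1 + F)ᵀ = u + F * u + (u * Fᵀ + F * (u * Fᵀ)) := by
      rw [transpose_add, transpose_one]
      noncomm_ring
    rw [expand, hFu, huFT]
    congr 1
    congr 1
    rw [mul_add, mul_vecMulVec', mul_vecMulVec', hFmv, hFmv]
  -- identify with the block matrix
  have hD : (1 + F) * u * (1 + F)ᵀ = bmat hn t 0 0 M := by
    rw [key]
    ext i j
    simp only [Matrix.add_apply, vecMulVec_apply, Pi.add_apply, Pi.smul_apply, smul_eq_mul,
      transpose_apply]
    rcases cases3 hn i with rfl | rfl | ⟨a, rfl⟩ <;> rcases cases3 hn j with rfl | rfl | ⟨b, rfl⟩ <;>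
      simp only [hu, bmat_00, bmat_01, bmat_10, bmat_11, bmat_0e, bmat_1e, bmat_e0, bmat_e1,
        bmat_ee, hA0, hA1, hB0, hB1, hAe, hBe, Pi.zero_apply] <;>
      field_simp <;> ring
  have hrank1 : u.rank = (bmat hn t 0 0 M).rank := by
    rw [← hD, Matrix.rank_mul_eq_left_of_isUnit_det _ _ hETdet,
      Matrix.rank_mul_eq_right_of_isUnit_det _ _ hEdet]
  -- block matrix rank
  let τ : Fin 2 ⊕ Fin (2*n-1) ≃ Fin (2*n+1) :=
    finSumFinEquiv.trans (finCongr (by omega))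
  have hτ0 : τ (Sum.inl 0) = 0 := by
    apply Fin.ext
    simp [τ, val_zero' hn]
  have hτ1 : τ (Sum.inl 1) = 1 := by
    apply Fin.ext
    simp [τ, val_one' hn, hmod]
  have hτe : ∀ i, τ (Sum.inr i) = emb i := by
    intro i
    apply Fin.ext
    simp [τ, emb]
    omega
  have hsub : (bmat hn t 0 0 M).submatrix τ τ =
      fromBlocks !![0, t; -t, 0] 0 0 M := by
    ext x y
    rcases x with a | i <;> rcases y with b | j
    · fin_cases a <;> fin_cases b <;>
        simp [hτ0, hτ1, bmat_00, bmat_01, bmat_10, bmat_11]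
    · fin_cases a <;>
        simp [hτ0, hτ1, hτe, bmat_0e, bmat_1e]
    · fin_cases b <;>
        simp [hτ0, hτ1, hτe, bmat_e0, bmat_e1]
    · simp [hτe, bmat_ee]
  have hJ : (!![0, t; -t, 0] : Matrix (Fin 2) (Fin 2) ℂ).rank = 2 := by
    have hdet : (!![0, t; -t, 0] : Matrix (Fin 2) (Fin 2) ℂ).det = t * t := by
      simp [Matrix.det_fin_two_of]
    have : IsUnit (!![0, t; -t, 0] : Matrix (Fin 2) (Fin 2) ℂ) := by
      rw [Matrix.isUnit_iff_isUnit_det, hdet]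
      exact (mul_ne_zero ht ht).isUnit
    rw [Matrix.rank_of_isUnit _ this, Fintype.card_fin]
  have := Matrix.rank_submatrix (bmat hn t 0 0 M) τ τ
  rw [hrank1, ← this, hsub, rank_fromBlocks_diag, hJ]
  omega

end PfAux



/-- For `n ≥ 1`, on the set `U` of skew-symmetric `(2n+1) × (2n+1)` complex matrices
with `u₁₂ ≠ 0`, the map `π(u) = (u₁₂, (u_{1,i+2})_i, (u_{2,i+2})_i, M)` with
`M_{ij} = u_{i+2,j+2} − (u_{1,i+2}·u_{2,j+2} − u_{1,j+2}·u_{2,i+2})/u₁₂` produces a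
skew-symmetric matrix `M`, is a bijection from `U` onto
`ℂ* × ℂ^{2n−1} × ℂ^{2n−1} × {skew-symmetric (2n−1) × (2n−1) matrices}`, and restricts
to a bijection from `{u ∈ U : rank(u) ≤ 2n−2}` onto
`ℂ* × ℂ^{2n−1} × ℂ^{2n−1} × {skew-symmetric M : rank(M) ≤ 2n−4}`. -/
theorem localization_of_pfaffian_variety (n : ℕ) (hn : 1 ≤ n) :
    let e : Fin (2 * n - 1) → Fin (2 * n + 1) := fun a => ⟨a.1 + 2, by have := a.2; omega⟩
    let π : {u : Matrix (Fin (2 * n + 1)) (Fin (2 * n + 1)) ℂ // uᵀ = -u ∧ u 0 1 ≠ 0} →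
        {t : ℂ // t ≠ 0} × (Fin (2 * n - 1) → ℂ) × (Fin (2 * n - 1) → ℂ) ×
          Matrix (Fin (2 * n - 1)) (Fin (2 * n - 1)) ℂ :=
      fun u =>
        (⟨u.1 0 1, u.2.2⟩,
         fun i => u.1 0 (e i),
         fun i => u.1 1 (e i),
         Matrix.of fun i j =>
           u.1 (e i) (e j) -
             (u.1 0 (e i) * u.1 1 (e j) - u.1 0 (e j) * u.1 1 (e i)) / u.1 0 1)
    (∀ u, ((π u).2.2.2)ᵀ = -(π u).2.2.2) ∧
    Set.BijOn π Set.univ {x | (x.2.2.2)ᵀ = -x.2.2.2} ∧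
    Set.BijOn π {u | ((u.1.rank : ℤ) ≤ 2 * (n : ℤ) - 2)}
      {x | (x.2.2.2)ᵀ = -x.2.2.2 ∧ ((x.2.2.2.rank : ℤ) ≤ 2 * (n : ℤ) - 4)} := by
  intro e π
  have he : ∀ a : Fin (2*n-1), e a = PfAux.emb a := fun a => rfl
  have hskew : ∀ (u : Matrix (Fin (2*n+1)) (Fin (2*n+1)) ℂ), uᵀ = -u →
      ∀ a b, u b a = -u a b := by
    intro u h a b
    have := congrFun (congrFun h a) b
    simpa using this
  -- Part 1 : skew-symmetry of the produced matrix
  have part1 : ∀ u : {u : Matrix (Fin (2*n+1)) (Fin (2*n+1)) ℂ // uᵀ = -u ∧ u 0 1 ≠ 0},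
      ((π u).2.2.2)ᵀ = -(π u).2.2.2 := by
    intro u
    show (Matrix.of fun i j => u.1 (e i) (e j) -
        (u.1 0 (e i) * u.1 1 (e j) - u.1 0 (e j) * u.1 1 (e i)) / u.1 0 1)ᵀ
      = -(Matrix.of fun i j => u.1 (e i) (e j) -
        (u.1 0 (e i) * u.1 1 (e j) - u.1 0 (e j) * u.1 1 (e i)) / u.1 0 1)
    ext i j
    simp only [Matrix.transpose_apply, Matrix.neg_apply, Matrix.of_apply]
    rw [hskew u.1 u.2.1 (e i) (e j)]
    ring
  -- reconstruction of `u` from `π u`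
  have hrecon : ∀ u : {u : Matrix (Fin (2*n+1)) (Fin (2*n+1)) ℂ // uᵀ = -u ∧ u 0 1 ≠ 0},
      PfAux.bmat hn (u.1 0 1) (fun i => u.1 0 (e i)) (fun i => u.1 1 (e i))
        (Matrix.of fun i j => u.1 (e i) (e j) -
          (u.1 0 (e i) * u.1 1 (e j) - u.1 0 (e j) * u.1 1 (e i)) / u.1 0 1) = u.1 := by
    intro u
    obtain ⟨hsk, hne⟩ := u.2
    have hs := hskew u.1 hsk
    have hdiag : ∀ a, u.1 a a = 0 := by
      intro a
      have h := hs a a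
      linear_combination (1/2 : ℂ) * h
    simp only [he]
    ext i j
    rcases PfAux.cases3 hn i with rfl | rfl | ⟨a, rfl⟩ <;>
      rcases PfAux.cases3 hn j with rfl | rfl | ⟨b, rfl⟩
    · rw [PfAux.bmat_00]; exact (hdiag 0).symm
    · rw [PfAux.bmat_01]
    · rw [PfAux.bmat_0e]
    · rw [PfAux.bmat_10]; exact (hs 0 1).symm
    · rw [PfAux.bmat_11]; exact (hdiag 1).symm
    · rw [PfAux.bmat_1e]
    · rw [PfAux.bmat_e0]; exact (hs 0 (PfAux.emb a)).symm
    · rw [PfAux.bmat_e1]; exact (hs 1 (PfAux.emb a)).symm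
    · rw [PfAux.bmat_ee, Matrix.of_apply]; ring
  -- global injectivity
  have hinj : Function.Injective π := by
    intro u v h
    have h1 : u.1 0 1 = v.1 0 1 := congrArg (fun x => (x.1 : ℂ)) h
    have h2 : (fun i => u.1 0 (e i)) = (fun i => v.1 0 (e i)) := congrArg (fun x => x.2.1) h
    have h3 : (fun i => u.1 1 (e i)) = (fun i => v.1 1 (e i)) := congrArg (fun x => x.2.2.1) h
    have h4 : (Matrix.of fun i j => u.1 (e i) (e j) -
          (u.1 0 (e i) * u.1 1 (e j) - u.1 0 (e j) * u.1 1 (e i)) / u.1 0 1)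
        = (Matrix.of fun i j => v.1 (e i) (e j) -
          (v.1 0 (e i) * v.1 1 (e j) - v.1 0 (e j) * v.1 1 (e i)) / v.1 0 1) :=
      congrArg (fun x => x.2.2.2) h
    apply Subtype.ext
    rw [← hrecon u, ← hrecon v, h4, h1, h2, h3]
  -- surjectivity onto skew matrices
  have hsurj : ∀ x : {t : ℂ // t ≠ 0} × (Fin (2*n-1) → ℂ) × (Fin (2*n-1) → ℂ) ×
      Matrix (Fin (2*n-1)) (Fin (2*n-1)) ℂ, (x.2.2.2)ᵀ = -x.2.2.2 →
      ∃ u, π u = x ∧ u.1 = PfAux.bmat hn x.1.1 x.2.1 x.2.2.1 x.2.2.2 := by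
    rintro ⟨⟨t, ht⟩, c, r, M⟩ hx
    simp only at hx
    refine ⟨⟨PfAux.bmat hn t c r M, PfAux.bmat_skew hn t c r M hx,
      PfAux.bmat_ne0 hn t c r M ht⟩, ?_, rfl⟩
    refine Prod.ext ?_ (Prod.ext ?_ (Prod.ext ?_ ?_))
    · exact Subtype.ext (PfAux.bmat_01 hn t c r M)
    · funext i
      show PfAux.bmat hn t c r M 0 (e i) = c i
      rw [he i, PfAux.bmat_0e]
    · funext i
      show PfAux.bmat hn t c r M 1 (e i) = r i
      rw [he i, PfAux.bmat_1e]
    · show (Matrix.of fun i j => PfAux.bmat hn t c r M (e i) (e j) -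
          (PfAux.bmat hn t c r M 0 (e i) * PfAux.bmat hn t c r M 1 (e j) -
            PfAux.bmat hn t c r M 0 (e j) * PfAux.bmat hn t c r M 1 (e i)) /
              PfAux.bmat hn t c r M 0 1) = M
      ext i j
      rw [Matrix.of_apply, he i, he j, PfAux.bmat_ee, PfAux.bmat_0e, PfAux.bmat_0e,
        PfAux.bmat_1e, PfAux.bmat_1e, PfAux.bmat_01]
      ring
  -- rank relation
  have hrank : ∀ u : {u : Matrix (Fin (2*n+1)) (Fin (2*n+1)) ℂ // uᵀ = -u ∧ u 0 1 ≠ 0},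
      u.1.rank = ((π u).2.2.2).rank + 2 := by
    intro u
    conv_lhs => rw [← hrecon u]
    exact PfAux.bmat_rank hn _ u.2.2 _ _ _
  refine ⟨part1, ⟨fun u _ => part1 u, fun u _ v _ h => hinj h, ?_⟩, ?_, ?_, ?_⟩
  · intro x hx
    obtain ⟨u, hu, -⟩ := hsurj x hx
    exact ⟨u, trivial, hu⟩
  · intro u hu
    have h1 := hrank u
    have h2 : (u.1.rank : ℤ) = ((π u).2.2.2).rank + 2 := by exact_mod_cast h1
    simp only [Set.mem_setOf_eq] at hu ⊢
    refine ⟨part1 u, ?_⟩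
    show (((π u).2.2.2).rank : ℤ) ≤ 2 * (n : ℤ) - 4
    omega
  · exact fun u _ v _ h => hinj h
  · intro x hx
    simp only [Set.mem_setOf_eq] at hx
    obtain ⟨u, hu, -⟩ := hsurj x hx.1
    refine ⟨u, ?_, hu⟩
    simp only [Set.mem_setOf_eq]
    have h1 := hrank u
    rw [hu] at h1
    have h2 : (u.1.rank : ℤ) = (x.2.2.2).rank + 2 := by exact_mod_cast h1
    have h3 := hx.2
    omega
end

section
/- Let r ≥ 1 be an integer. Set Q(s,z) = (−z)·∏_{i=1}^{r−1} (s + r − i − z) and FQ(s,z) = (−z)·∏_{j=1}^{r−1} (−s − j − z) in ℂ[s,z]. There are unique polynomials Q_0(s),…,Q_r(s) ∈ ℂ[s] with Q(s,z) = ∑_{a=0}^{r} (−1)^{r−a} · Q_a(s) · [z]_{r−a}, and unique polynomials FQ_0(s),…,FQ_r(s) ∈ ℂ[s] with FQ(s,z) = ∑_{a=0}^{r} (−1)^{r−a} · FQ_a(s) · [z]_{r−a}. For every a ∈ {0,…,r} one has FQ_a(s) = Q_a(−s−r). -/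
open Polynomial Finset

local notation "R" => Polynomial ℂ

/-- falling factorial polynomials in `R[X]` -/
noncomputable def ffP (k : ℕ) : Polynomial R :=
  ∏ i ∈ Finset.range k, (Polynomial.X - (i : Polynomial R))

lemma ffP_cast (i : ℕ) :
    (Polynomial.X - (i : Polynomial R)) = Polynomial.X - Polynomial.C ((i : R)) := by
  rw [Polynomial.C_eq_natCast]

lemma ffP_monic (k : ℕ) : (ffP k).Monic := by
  apply monic_prod_of_monic
  intro i _
  rw [ffP_cast]
  exact monic_X_sub_C _

lemma ffP_natDegree (k : ℕ) : (ffP k).natDegree = k := by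
  rw [ffP, natDegree_prod_of_monic _ _ (fun i _ => by rw [ffP_cast]; exact monic_X_sub_C _)]
  simp [ffP_cast, Polynomial.natDegree_X_sub_C]

lemma ffP_exists (n : ℕ) : ∀ F : Polynomial R, F.natDegree ≤ n →
    ∃ c : ℕ → R, F = ∑ k ∈ range (n + 1), Polynomial.C (c k) * ffP k := by
  induction n with
  | zero =>
    intro F hF
    exact ⟨fun _ => F.coeff 0, by
      simpa [ffP] using Polynomial.eq_C_of_natDegree_le_zero hF⟩
  | succ n ih =>
    intro F hF
    set a := F.coeff (n + 1) with ha
    have hG : (F - Polynomial.C a * ffP (n + 1)).natDegree ≤ n := by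
      rw [natDegree_le_iff_coeff_eq_zero]
      intro N hN
      rcases eq_or_lt_of_le (Nat.succ_le_of_lt hN) with h | h
      · simp only [coeff_sub, coeff_C_mul, ← h]
        rw [show (ffP (n+1)).coeff (n+1) = 1 by
          simpa [ffP_natDegree] using (ffP_monic (n+1)).coeff_natDegree]
        ring
      · have h1 : F.coeff N = 0 :=
          coeff_eq_zero_of_natDegree_lt (lt_of_le_of_lt hF h)
        have h2 : (ffP (n+1)).coeff N = 0 :=
          coeff_eq_zero_of_natDegree_lt (by rw [ffP_natDegree]; exact h)
        simp [h1, h2]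
    obtain ⟨c, hc⟩ := ih _ hG
    refine ⟨Function.update c (n + 1) a, ?_⟩
    rw [Finset.sum_range_succ, Function.update_self]
    have : ∑ k ∈ range (n + 1), Polynomial.C (Function.update c (n + 1) a k) * ffP k
        = ∑ k ∈ range (n + 1), Polynomial.C (c k) * ffP k := by
      apply Finset.sum_congr rfl
      intro k hk
      rw [Function.update_of_ne (by simp at hk; omega)]
    rw [this, ← hc]
    ring

lemma ffP_coeff_top (n : ℕ) (c : ℕ → R) :
    (∑ k ∈ range (n + 1), Polynomial.C (c k) * ffP k).coeff n = c n := by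
  rw [finset_sum_coeff, Finset.sum_eq_single n]
  · rw [coeff_C_mul, show (ffP n).coeff n = 1 by
      simpa [ffP_natDegree] using (ffP_monic n).coeff_natDegree]
    ring
  · intro k hk hkn
    simp only [Finset.mem_range] at hk
    rw [coeff_C_mul, coeff_eq_zero_of_natDegree_lt (by rw [ffP_natDegree]; omega)]
    ring
  · simp

lemma ffP_zero (n : ℕ) : ∀ c : ℕ → R,
    (∑ k ∈ range (n + 1), Polynomial.C (c k) * ffP k) = 0 → ∀ k ≤ n, c k = 0 := by
  induction n with
  | zero =>
    intro c hc k hk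
    interval_cases k
    have := ffP_coeff_top 0 c
    rw [hc] at this
    simpa using this.symm
  | succ n ih =>
    intro c hc k hk
    have htop : c (n + 1) = 0 := by
      have := ffP_coeff_top (n + 1) c
      rw [hc] at this
      simpa using this.symm
    have hrest : (∑ k ∈ range (n + 1), Polynomial.C (c k) * ffP k) = 0 := by
      have := hc
      rw [Finset.sum_range_succ, htop] at this
      simpa using this
    rcases Nat.lt_or_ge k (n + 1) with h | h
    · exact ih c hrest k (by omega)
    · have : k = n + 1 := by omega
      rw [this]; exact htop

lemma ffP_conv (r : ℕ) (P : Fin (r + 1) → R) :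
    ∑ a : Fin (r + 1), (-1 : Polynomial R) ^ (r - a.1) * Polynomial.C (P a) * ffP (r - a.1)
      = ∑ k ∈ range (r + 1),
          Polynomial.C ((-1 : R) ^ k * P ⟨r - k, by omega⟩) * ffP k := by
  rw [← Finset.sum_range_reflect]
  rw [← Fin.sum_univ_eq_sum_range
    (fun j => Polynomial.C ((-1 : R) ^ (r + 1 - 1 - j) *
      P ⟨r - (r + 1 - 1 - j), by omega⟩) * ffP (r + 1 - 1 - j)) (r + 1)]
  apply Finset.sum_congr rfl
  intro a _
  have h1 : r + 1 - 1 - (a : ℕ) = r - a.1 := by omega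
  have h2 : r - (r - a.1) = a.1 := by omega
  simp only [h1, h2, Fin.eta]
  simp [map_mul, map_pow, mul_comm, mul_assoc, mul_left_comm]

lemma expand_unique {r : ℕ} {F : Polynomial R} {Q Q' : Fin (r + 1) → R}
    (h : F = ∑ a : Fin (r + 1),
      (-1 : Polynomial R) ^ (r - a.1) * Polynomial.C (Q a) * ffP (r - a.1))
    (h' : F = ∑ a : Fin (r + 1),
      (-1 : Polynomial R) ^ (r - a.1) * Polynomial.C (Q' a) * ffP (r - a.1)) :
    Q = Q' := by
  rw [ffP_conv] at h h'
  have hz : (∑ k ∈ range (r + 1),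
      Polynomial.C ((-1 : R) ^ k * Q ⟨r - k, by omega⟩ - (-1 : R) ^ k * Q' ⟨r - k, by omega⟩)
        * ffP k) = 0 := by
    simp only [map_sub, sub_mul, Finset.sum_sub_distrib]
    rw [← h, ← h']
    ring
  have key := ffP_zero r _ hz
  funext a
  have hk := key (r - a.1) (by omega)
  rw [sub_eq_zero] at hk
  have ha : a = ⟨r - (r - a.1), by omega⟩ := Fin.ext (by simp; omega)
  rw [ha]
  exact mul_left_cancel₀ (pow_ne_zero _ (by norm_num)) hk

lemma expand_exists {r : ℕ} {F : Polynomial R} (hF : F.natDegree ≤ r) :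
    ∃ Q : Fin (r + 1) → R, F = ∑ a : Fin (r + 1),
      (-1 : Polynomial R) ^ (r - a.1) * Polynomial.C (Q a) * ffP (r - a.1) := by
  obtain ⟨c, hc⟩ := ffP_exists r F hF
  refine ⟨fun a => (-1 : R) ^ (r - a.1) * c (r - a.1), ?_⟩
  rw [ffP_conv, hc]
  apply Finset.sum_congr rfl
  intro k hk
  simp only [Finset.mem_range] at hk
  have h2 : r - (r - k) = k := by omega
  congr 1
  rw [h2, ← mul_assoc, ← mul_pow]
  norm_num


/-- Working in `ℂ[s][z]`: for `Q(s,z) = (−z)·∏_{i=1}^{r−1}(s + r − i − z)` and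
`FQ(s,z) = (−z)·∏_{j=1}^{r−1}(−s − j − z)` there are unique polynomials
`Q_0,…,Q_r ∈ ℂ[s]` with `Q(s,z) = ∑_{a=0}^r (−1)^{r−a} Q_a(s) [z]_{r−a}` and unique
`FQ_0,…,FQ_r ∈ ℂ[s]` with `FQ(s,z) = ∑_{a=0}^r (−1)^{r−a} FQ_a(s) [z]_{r−a}`, where
`[z]_k = z(z−1)⋯(z−k+1)`; and `FQ_a(s) = Q_a(−s−r)` for all `a`. -/
theorem capelli_eigenvalue_fourier_transform_submaximal (r : ℕ) (hr : 1 ≤ r) :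
    let ff : ℕ → Polynomial (Polynomial ℂ) :=
      fun a => ∏ i ∈ Finset.range a, (Polynomial.X - (i : Polynomial (Polynomial ℂ)))
    let expandsTo : Polynomial (Polynomial ℂ) → (Fin (r + 1) → Polynomial ℂ) → Prop :=
      fun F P => F = ∑ a : Fin (r + 1),
        (-1 : Polynomial (Polynomial ℂ)) ^ (r - a.1) * Polynomial.C (P a) * ff (r - a.1)
    let lhs : Polynomial (Polynomial ℂ) :=
      (-Polynomial.X) *
        ∏ i ∈ Finset.Icc 1 (r - 1),
          (Polynomial.C (Polynomial.X + Polynomial.C ((r : ℂ) - (i : ℂ))) - Polynomial.X)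
    let flhs : Polynomial (Polynomial ℂ) :=
      (-Polynomial.X) *
        ∏ j ∈ Finset.Icc 1 (r - 1),
          (Polynomial.C (-Polynomial.X - Polynomial.C ((j : ℂ))) - Polynomial.X)
    (∃! Q : Fin (r + 1) → Polynomial ℂ, expandsTo lhs Q) ∧
    (∃! FQ : Fin (r + 1) → Polynomial ℂ, expandsTo flhs FQ) ∧
    (∀ Q FQ : Fin (r + 1) → Polynomial ℂ, expandsTo lhs Q → expandsTo flhs FQ →
      ∀ a : Fin (r + 1), FQ a = (Q a).comp (-Polynomial.X - Polynomial.C (r : ℂ))) := by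
  intro ff expandsTo lhs flhs
  have hE : ∀ (F : Polynomial (Polynomial ℂ)) (P : Fin (r + 1) → Polynomial ℂ),
      expandsTo F P ↔ F = ∑ a : Fin (r + 1),
        (-1 : Polynomial (Polynomial ℂ)) ^ (r - a.1) * Polynomial.C (P a) * ffP (r - a.1) :=
    fun F P => Iff.rfl
  set t : Polynomial ℂ := -Polynomial.X - Polynomial.C (r : ℂ) with ht
  set σ : Polynomial ℂ →+* Polynomial ℂ := (Polynomial.aeval t).toRingHom with hσ
  have hσ_apply : ∀ p : Polynomial ℂ, σ p = p.comp t := fun p =>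
    (Polynomial.comp_eq_aeval).symm
  set φ : Polynomial (Polynomial ℂ) →+* Polynomial (Polynomial ℂ) :=
    Polynomial.mapRingHom σ with hφ
  -- φ maps lhs to flhs
  have hφ_lhs : φ lhs = flhs := by
    show Polynomial.map σ lhs = flhs
    simp only [lhs, flhs, Polynomial.map_mul, Polynomial.map_neg, Polynomial.map_X]
    congr 1
    rw [Polynomial.map_prod]
    apply Finset.prod_congr rfl
    intro i hi
    rw [Polynomial.map_sub, Polynomial.map_X, Polynomial.map_C]
    congr 1
    rw [hσ_apply, Polynomial.add_comp, Polynomial.X_comp, Polynomial.C_comp, ht,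
      Polynomial.C_sub]
    ring
  -- φ fixes the falling factorials
  have hφ_ff : ∀ k, φ (ffP k) = ffP k := by
    intro k
    show Polynomial.map σ (ffP k) = ffP k
    rw [ffP, Polynomial.map_prod]
    apply Finset.prod_congr rfl
    intro i _
    rw [Polynomial.map_sub, Polynomial.map_X, Polynomial.map_natCast]
  -- transport expansions through φ
  have hmap : ∀ Q : Fin (r + 1) → Polynomial ℂ,
      lhs = (∑ a : Fin (r + 1),
        (-1 : Polynomial (Polynomial ℂ)) ^ (r - a.1) * Polynomial.C (Q a) * ffP (r - a.1)) →
      flhs = ∑ a : Fin (r + 1),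
        (-1 : Polynomial (Polynomial ℂ)) ^ (r - a.1) *
          Polynomial.C ((Q a).comp t) * ffP (r - a.1) := by
    intro Q hQ
    rw [← hφ_lhs, hQ, map_sum]
    apply Finset.sum_congr rfl
    intro a _
    have hφC : φ (Polynomial.C (Q a)) = Polynomial.C ((Q a).comp t) := by
      show Polynomial.map σ (Polynomial.C (Q a)) = _
      rw [Polynomial.map_C, hσ_apply]
    rw [map_mul, map_mul, map_pow, map_neg, map_one, hφ_ff, hφC]
  -- degree bound for lhs
  have hdeg : lhs.natDegree ≤ r := by
    have h1 : (∏ i ∈ Finset.Icc 1 (r - 1),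
        (Polynomial.C (Polynomial.X + Polynomial.C ((r : ℂ) - (i : ℂ))) -
          Polynomial.X)).natDegree ≤ r - 1 := by
      refine le_trans (Polynomial.natDegree_prod_le (Finset.Icc 1 (r - 1)) _) ?_
      refine le_trans (Finset.sum_le_card_nsmul _ _ 1 ?_) ?_
      · intro i _
        refine le_trans (Polynomial.natDegree_sub_le _ _) ?_
        rw [Polynomial.natDegree_C, Polynomial.natDegree_X]
        omega
      · simp only [smul_eq_mul, mul_one, Nat.card_Icc]
        omega
    refine le_trans (Polynomial.natDegree_mul_le) ?_
    have h2 : (-Polynomial.X : Polynomial (Polynomial ℂ)).natDegree = 1 := by simp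
    rw [h2]
    omega
  obtain ⟨Q0, hQ0⟩ := expand_exists hdeg
  simp only [hE]
  refine ⟨⟨Q0, hQ0, fun y hy => expand_unique hy hQ0⟩,
    ⟨fun a => (Q0 a).comp t, hmap Q0 hQ0,
      fun y hy => expand_unique hy (hmap Q0 hQ0)⟩, ?_⟩
  intro Q FQ hQ hFQ a
  exact congrFun (expand_unique hFQ (hmap Q hQ)) a
end
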